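/- Every ω-language recognized by a deterministic reachability-regular Parikh automaton is recognized by a deterministic weak reset Parikh automaton; moreover the inclusion is strict since {aⁿbⁿ | n > 0}^ω is deterministic weak reset PA recognizable but not reachability-regular PA recognizable. -/

import Mathlib

/-! Common definitions: semi-linear sets, Parikh automata on finite and infinite words. -/

/-- The linear set with base vector `b` and finite set `P` of period vectors. -/
def LinSet {d : ℕ} {M : Type} [AddCommMonoid M] (b : Fin d → M)
    (P : Finset (Fin d → M)) : Set (Fin d → M) :=
  {v | ∃ z : (Fin d → M) → ℕ, v = b + ∑ p ∈ P, z p • p}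

/-- A set is semi-linear if it is a finite union of linear sets. -/
def SemiLin {d : ℕ} {M : Type} [AddCommMonoid M] (S : Set (Fin d → M)) : Prop :=
  ∃ (n : ℕ) (b : Fin n → Fin d → M) (P : Fin n → Finset (Fin d → M)),
    S = ⋃ i, LinSet (b i) (P i)

/-- The length-`n` prefix of an infinite word. -/
def pref {S : Type} (α : ℕ → S) (n : ℕ) : List S := List.ofFn fun i : Fin n => α i.1

/-- An infinite word is ultimately periodic if it has the form `u v^ω`. -/
def UltimatelyPeriodic {S : Type} (α : ℕ → S) : Prop :=
  ∃ n p, 0 < p ∧ ∀ i, n ≤ i → α (i + p) = α i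

/-- The finite infix `α[m+1 : n]` (0-indexed positions `m, …, n-1`). -/
def infixSeg {S : Type} (α : ℕ → S) (m n : ℕ) : List S :=
  List.ofFn fun j : Fin (n - m) => α (m + j.1)

/-- `W^ω`: infinite concatenations of non-empty words from `W`. -/
def omegaPow {S : Type} (W : Set (List S)) : Set (ℕ → S) :=
  {α | ∃ k : ℕ → ℕ, k 0 = 0 ∧ StrictMono k ∧ ∀ i, infixSeg α (k i) (k (i + 1)) ∈ W}

/-- A deterministic Parikh automaton with states `Q`, alphabet `S`, dimension `d`,
and a constraint set `C` of vectors over `M` (`M = ℕ`, or `M = ℕ∞` for limit PA). -/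
structure DetPA (Q S : Type) (d : ℕ) (M : Type) where
  init : Q
  trans : Q → S → (Fin d → ℕ) × Q
  acc : Q → Prop
  C : Set (Fin d → M)

namespace DetPA

variable {Q S M : Type} {d : ℕ}

/-- The run of `A` from state `p` on the infinite word `α`: state after `i` letters. -/
def run (A : DetPA Q S d M) (p : Q) (α : ℕ → S) : ℕ → Q
  | 0 => p
  | i + 1 => (A.trans (A.run p α i) (α i)).2

/-- The state of the unique run of `A` on `α` after `i` letters. -/
def stateAt (A : DetPA Q S d M) (α : ℕ → S) : ℕ → Q := A.run A.init α

/-- The vector of the `i`-th transition of the unique run of `A` on `α`. -/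
def step (A : DetPA Q S d M) (α : ℕ → S) (i : ℕ) : Fin d → ℕ :=
  (A.trans (A.stateAt α i) (α i)).1

/-- Sum of transition vectors of the run of `A` on `α` on positions `m, …, n-1`. -/
def vecSum (A : DetPA Q S d M) (α : ℕ → S) (m n : ℕ) : Fin d → ℕ :=
  ∑ i ∈ Finset.Ico m n, A.step α i

/-- The state reached when reading a finite word from state `p`. -/
def runList (A : DetPA Q S d M) : Q → List S → Q
  | p, [] => p
  | p, a :: w => A.runList (A.trans p a).2 w

/-- The sum of transition vectors collected when reading a finite word from state `p`. -/
def sumList (A : DetPA Q S d M) : Q → List S → (Fin d → ℕ)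
  | _, [] => 0
  | p, a :: w => (A.trans p a).1 + A.sumList (A.trans p a).2 w

/-- Finite-word acceptance: end in an accepting state with vector sum in `C`. -/
def AcceptsWord (A : DetPA Q S d ℕ) (w : List S) : Prop :=
  A.acc (A.runList A.init w) ∧ A.sumList A.init w ∈ A.C

/-- The run visits accepting states infinitely often. -/
def InfAcc (A : DetPA Q S d M) (α : ℕ → S) : Prop :=
  ∀ n, ∃ i, n ≤ i ∧ A.acc (A.stateAt α i)

/-- Reachability condition. -/
def ReachAccept (A : DetPA Q S d ℕ) (α : ℕ → S) : Prop :=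
  ∃ i, 1 ≤ i ∧ A.acc (A.stateAt α i) ∧ A.vecSum α 0 i ∈ A.C

/-- Reachability-regular condition. -/
def ReachRegAccept (A : DetPA Q S d ℕ) (α : ℕ → S) : Prop :=
  A.ReachAccept α ∧ A.InfAcc α

/-- Büchi condition. -/
def BuchiAccept (A : DetPA Q S d ℕ) (α : ℕ → S) : Prop :=
  ∀ n, ∃ i, n ≤ i ∧ 1 ≤ i ∧ A.acc (A.stateAt α i) ∧ A.vecSum α 0 i ∈ A.C

/-- Weak reset condition. -/
def WeakResetAccept (A : DetPA Q S d ℕ) (α : ℕ → S) : Prop :=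
  ∃ k : ℕ → ℕ, k 0 = 0 ∧ StrictMono k ∧
    (∀ i, A.acc (A.stateAt α (k (i + 1)))) ∧
    (∀ i, A.vecSum α (k i) (k (i + 1)) ∈ A.C)

/-- Strong reset condition: accepting states occur infinitely often, and between any
two consecutive accepting positions (and from position `0` to the first one) the
collected vector lies in `C`. -/
def StrongResetAccept (A : DetPA Q S d ℕ) (α : ℕ → S) : Prop :=
  (∀ n, ∃ i, n ≤ i ∧ 1 ≤ i ∧ A.acc (A.stateAt α i)) ∧
  ∀ m n, m < n → (m = 0 ∨ (1 ≤ m ∧ A.acc (A.stateAt α m))) →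
    A.acc (A.stateAt α n) →
    (∀ j, m < j → j < n → ¬ A.acc (A.stateAt α j)) →
    A.vecSum α m n ∈ A.C

/-- The extended Parikh image of the unique run of `A` on `α`: componentwise the
supremum in `ℕ∞` of the partial sums (`∞` iff the component is incremented
infinitely often, else the finite total sum). -/
noncomputable def limImage (A : DetPA Q S d M) (α : ℕ → S) : Fin d → ℕ∞ :=
  fun j => ⨆ n, (A.vecSum α 0 n j : ℕ∞)

/-- Limit condition. -/
def LimitAccept (A : DetPA Q S d ℕ∞) (α : ℕ → S) : Prop :=
  A.InfAcc α ∧ A.limImage α ∈ A.C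

end DetPA

/-- `U` is recognized by a deterministic finite-word Parikh automaton. -/
def DetPARecogFin {S : Type} (U : Set (List S)) : Prop :=
  ∃ (d : ℕ) (Q : Type) (_ : Finite Q) (A : DetPA Q S d ℕ),
    SemiLin A.C ∧ U = {w | A.AcceptsWord w}

/-- `L` is recognized by a deterministic reachability PA. -/
def DetReachRecog {S : Type} (L : Set (ℕ → S)) : Prop :=
  ∃ (d : ℕ) (Q : Type) (_ : Finite Q) (A : DetPA Q S d ℕ),
    SemiLin A.C ∧ L = {α | A.ReachAccept α}

/-- `L` is recognized by a deterministic reachability-regular PA. -/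
def DetReachRegRecog {S : Type} (L : Set (ℕ → S)) : Prop :=
  ∃ (d : ℕ) (Q : Type) (_ : Finite Q) (A : DetPA Q S d ℕ),
    SemiLin A.C ∧ L = {α | A.ReachRegAccept α}

/-- `L` is recognized by a deterministic Büchi PA. -/
def DetBuchiRecog {S : Type} (L : Set (ℕ → S)) : Prop :=
  ∃ (d : ℕ) (Q : Type) (_ : Finite Q) (A : DetPA Q S d ℕ),
    SemiLin A.C ∧ L = {α | A.BuchiAccept α}

/-- `L` is recognized by a deterministic weak reset PA. -/
def DetWeakResetRecog {S : Type} (L : Set (ℕ → S)) : Prop :=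
  ∃ (d : ℕ) (Q : Type) (_ : Finite Q) (A : DetPA Q S d ℕ),
    SemiLin A.C ∧ L = {α | A.WeakResetAccept α}

/-- `L` is recognized by a deterministic strong reset PA. -/
def DetStrongResetRecog {S : Type} (L : Set (ℕ → S)) : Prop :=
  ∃ (d : ℕ) (Q : Type) (_ : Finite Q) (A : DetPA Q S d ℕ),
    SemiLin A.C ∧ L = {α | A.StrongResetAccept α}

/-- `L` is recognized by a deterministic limit PA (constraint set over `ℕ∞`). -/
def DetLimitRecog {S : Type} (L : Set (ℕ → S)) : Prop :=
  ∃ (d : ℕ) (Q : Type) (_ : Finite Q) (A : DetPA Q S d ℕ∞),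
    SemiLin A.C ∧ L = {α | A.LimitAccept α}

/-- A nondeterministic Parikh automaton. -/
structure NPA (Q S : Type) (d : ℕ) where
  init : Q
  trans : Q → S → (Fin d → ℕ) → Q → Prop
  acc : Q → Prop
  C : Set (Fin d → ℕ)

namespace NPA

variable {Q S : Type} {d : ℕ}

/-- `r, v` form a run of `A` on the infinite word `α`. -/
def IsRun (A : NPA Q S d) (α : ℕ → S) (r : ℕ → Q) (v : ℕ → Fin d → ℕ) : Prop :=
  r 0 = A.init ∧ ∀ i, A.trans (r i) (α i) (v i) (r (i + 1))

/-- Partial sums of the vectors of a run over positions `m, …, n-1`. -/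
def partSum (v : ℕ → Fin d → ℕ) (m n : ℕ) : Fin d → ℕ := ∑ i ∈ Finset.Ico m n, v i

/-- Nondeterministic reachability-regular acceptance. -/
def ReachRegAccept (A : NPA Q S d) (α : ℕ → S) : Prop :=
  ∃ r v, A.IsRun α r v ∧ (∃ i, 1 ≤ i ∧ A.acc (r i) ∧ partSum v 0 i ∈ A.C) ∧
    ∀ n, ∃ i, n ≤ i ∧ A.acc (r i)

/-- Nondeterministic strong reset acceptance. -/
def StrongResetAccept (A : NPA Q S d) (α : ℕ → S) : Prop :=
  ∃ r v, A.IsRun α r v ∧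
    (∀ n, ∃ i, n ≤ i ∧ 1 ≤ i ∧ A.acc (r i)) ∧
    ∀ m n, m < n → (m = 0 ∨ (1 ≤ m ∧ A.acc (r m))) → A.acc (r n) →
      (∀ j, m < j → j < n → ¬ A.acc (r j)) → partSum v m n ∈ A.C

/-- Nondeterministic weak reset acceptance. -/
def WeakResetAccept (A : NPA Q S d) (α : ℕ → S) : Prop :=
  ∃ r v, A.IsRun α r v ∧ ∃ k : ℕ → ℕ, k 0 = 0 ∧ StrictMono k ∧
    (∀ i, A.acc (r (k (i + 1)))) ∧ (∀ i, partSum v (k i) (k (i + 1)) ∈ A.C)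

/-- Runs of a nondeterministic PA on a finite word, from state `p` to state `q`
collecting vector sum `v`. -/
def ListRun (A : NPA Q S d) : Q → List S → (Fin d → ℕ) → Q → Prop
  | p, [], v, q => q = p ∧ v = 0
  | p, a :: w, v, q => ∃ u p', A.trans p a u p' ∧ ∃ v', A.ListRun p' w v' q ∧ v = u + v'

/-- Finite-word acceptance for a nondeterministic PA. -/
def AcceptsWord (A : NPA Q S d) (w : List S) : Prop :=
  ∃ v q, A.ListRun A.init w v q ∧ A.acc q ∧ v ∈ A.C

end NPA

/-- `L` is recognized by a (nondeterministic) reachability-regular PA. -/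
def NPAReachRegRecog {S : Type} (L : Set (ℕ → S)) : Prop :=
  ∃ (d : ℕ) (Q : Type) (_ : Finite Q) (A : NPA Q S d),
    SemiLin A.C ∧ L = {α | A.ReachRegAccept α}

/-- `L` is recognized by a (nondeterministic) strong reset PA. -/
def NPAStrongResetRecog {S : Type} (L : Set (ℕ → S)) : Prop :=
  ∃ (d : ℕ) (Q : Type) (_ : Finite Q) (A : NPA Q S d),
    SemiLin A.C ∧ L = {α | A.StrongResetAccept α}

/-- `L` is recognized by a (nondeterministic) weak reset PA. -/
def NPAWeakResetRecog {S : Type} (L : Set (ℕ → S)) : Prop :=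
  ∃ (d : ℕ) (Q : Type) (_ : Finite Q) (A : NPA Q S d),
    SemiLin A.C ∧ L = {α | A.WeakResetAccept α}

/-- A nondeterministic Büchi automaton. -/
structure NBA (Q S : Type) where
  init : Q
  trans : Q → S → Q → Prop
  acc : Q → Prop

/-- Büchi acceptance. -/
def NBA.Accepts {Q S : Type} (B : NBA Q S) (α : ℕ → S) : Prop :=
  ∃ r : ℕ → Q, r 0 = B.init ∧ (∀ i, B.trans (r i) (α i) (r (i + 1))) ∧
    ∀ n, ∃ i, n ≤ i ∧ B.acc (r i)

/-- `L` is ω-regular: recognized by a nondeterministic Büchi automaton. -/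
def OmegaRegular {S : Type} (L : Set (ℕ → S)) : Prop :=
  ∃ (Q : Type) (_ : Finite Q) (B : NBA Q S), L = {α | B.Accepts α}

/-- The finite-word language `{aⁿbⁿ | n > 0}` over `{a,b} = Bool`
(`a := true`, `b := false`). -/
def Wanbn : Set (List Bool) :=
  {w | ∃ n, 0 < n ∧ w = List.replicate n true ++ List.replicate n false}

/-! ### Auxiliary general lemmas -/

section Aux

variable {Q S M : Type} {d : ℕ}

namespace DetPA

lemma runList_snoc (A : DetPA Q S d M) (p : Q) (w : List S) (x : S) :
    A.runList p (w ++ [x]) = (A.trans (A.runList p w) x).2 := by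
  induction w generalizing p with
  | nil => rfl
  | cons a w ih => simp [runList, ih]

lemma sumList_snoc (A : DetPA Q S d M) (p : Q) (w : List S) (x : S) :
    A.sumList p (w ++ [x]) = A.sumList p w + (A.trans (A.runList p w) x).1 := by
  induction w generalizing p with
  | nil => simp [sumList, runList]
  | cons a w ih => simp [sumList, runList, ih, add_assoc]

lemma runList_append (A : DetPA Q S d M) (p : Q) (u v : List S) :
    A.runList p (u ++ v) = A.runList (A.runList p u) v := by
  induction u generalizing p with
  | nil => rfl
  | cons a u ih => simp [runList, ih]

lemma sumList_append (A : DetPA Q S d M) (p : Q) (u v : List S) :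
    A.sumList p (u ++ v) = A.sumList p u + A.sumList (A.runList p u) v := by
  induction u generalizing p with
  | nil => simp [sumList, runList]
  | cons a u ih => simp [sumList, runList, ih, add_assoc]

end DetPA

lemma infixSeg_self {α : ℕ → S} (m : ℕ) : infixSeg α m m = [] := by
  simp [infixSeg]

lemma length_infixSeg {α : ℕ → S} (m n : ℕ) : (infixSeg α m n).length = n - m := by
  simp [infixSeg]

lemma getElem_infixSeg {α : ℕ → S} {m n j : ℕ} (h : j < n - m) :
    (infixSeg α m n)[j]'(by simpa [infixSeg] using h) = α (m + j) := by
  simp [infixSeg]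

lemma infix_of_letters {α : ℕ → S} {m n : ℕ} {l : List S}
    (hlen : n - m = l.length)
    (hj : ∀ j (hj : j < l.length), α (m + j) = l[j]) :
    infixSeg α m n = l := by
  apply List.ext_getElem (by simpa [infixSeg] using hlen)
  intro i h1 h2
  rw [getElem_infixSeg (by omega : i < n - m)]
  exact hj i h2

lemma letters_of_infix {α : ℕ → S} {m n : ℕ} {l : List S}
    (h : infixSeg α m n = l) :
    n - m = l.length ∧ ∀ j (hj : j < l.length), α (m + j) = l[j] := by
  subst h
  refine ⟨(length_infixSeg m n).symm, fun j hj => ?_⟩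
  rw [getElem_infixSeg (by simpa [infixSeg] using hj)]

lemma infixSeg_snoc {α : ℕ → S} {m n : ℕ} (h : m ≤ n) :
    infixSeg α m (n + 1) = infixSeg α m n ++ [α n] := by
  apply infix_of_letters
  · simp [length_infixSeg]; omega
  · intro j hj
    simp [length_infixSeg] at hj
    rcases lt_or_ge j (n - m) with hlt | hge
    · rw [List.getElem_append_left (by simpa [length_infixSeg] using hlt)]
      rw [getElem_infixSeg hlt]
    · have hje : j = n - m := by omega
      rw [List.getElem_append_right (by simpa [length_infixSeg] using hge)]
      simp [length_infixSeg, hje]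
      congr 1; omega

lemma infixSeg_cons {α : ℕ → S} {m n : ℕ} (h : m < n) :
    infixSeg α m n = α m :: infixSeg α (m + 1) n := by
  apply infix_of_letters
  · simp [length_infixSeg]; omega
  · intro j hj
    cases j with
    | zero => simp
    | succ j =>
      simp only [List.getElem_cons_succ]
      simp [length_infixSeg] at hj
      rw [getElem_infixSeg (by omega : j < n - (m+1))]
      congr 1; omega

namespace DetPA

lemma run_eq_runList (A : DetPA Q S d M) (p : Q) (α : ℕ → S) {m n : ℕ} (h : m ≤ n) :
    A.run p α n = A.runList (A.run p α m) (infixSeg α m n) := by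
  induction n with
  | zero =>
    have : m = 0 := by omega
    subst this; simp [infixSeg_self, runList]
  | succ n ih =>
    rcases Nat.eq_or_lt_of_le h with he | hlt
    · subst he; simp [infixSeg_self, runList]
    · have hm : m ≤ n := by omega
      rw [infixSeg_snoc hm, runList_snoc, ← ih hm]
      rfl

lemma stateAt_eq_runList (A : DetPA Q S d M) (α : ℕ → S) {m n : ℕ} (h : m ≤ n) :
    A.stateAt α n = A.runList (A.stateAt α m) (infixSeg α m n) :=
  A.run_eq_runList A.init α h

lemma vecSum_eq_sumList (A : DetPA Q S d M) (α : ℕ → S) {m n : ℕ} (h : m ≤ n) :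
    A.vecSum α m n = A.sumList (A.stateAt α m) (infixSeg α m n) := by
  induction n with
  | zero =>
    have : m = 0 := by omega
    subst this; simp [infixSeg_self, sumList, vecSum]
  | succ n ih =>
    rcases Nat.eq_or_lt_of_le h with he | hlt
    · subst he; simp [infixSeg_self, sumList, vecSum]
    · have hm : m ≤ n := by omega
      rw [infixSeg_snoc hm, sumList_snoc, ← ih hm, ← stateAt_eq_runList A α hm]
      rw [vecSum, Finset.sum_Ico_succ_top hm]
      rfl

end DetPA

end Aux
/-! ### Part 1: reach-regular ⊆ weak reset -/

section Part1

variable {S : Type} {d : ℕ}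

lemma semiLin_union {D : ℕ} {C1 C2 : Set (Fin D → ℕ)} (h1 : SemiLin C1) (h2 : SemiLin C2) :
    SemiLin (C1 ∪ C2) := by
  obtain ⟨n1, b1, P1, hC1⟩ := h1
  obtain ⟨n2, b2, P2, hC2⟩ := h2
  refine ⟨n1 + n2, Fin.append b1 b2, Fin.append P1 P2, ?_⟩
  subst hC1 hC2
  ext v
  simp only [Set.mem_union, Set.mem_iUnion]
  constructor
  · rintro (⟨i, hi⟩ | ⟨i, hi⟩)
    · exact ⟨Fin.castAdd n2 i, by simpa [Fin.append_left] using hi⟩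
    · exact ⟨Fin.natAdd n1 i, by simpa [Fin.append_right] using hi⟩
  · rintro ⟨i, hi⟩
    revert hi
    refine Fin.addCases (fun i => ?_) (fun i => ?_) i <;> intro hi
    · exact Or.inl ⟨i, by simpa [Fin.append_left] using hi⟩
    · exact Or.inr ⟨i, by simpa [Fin.append_right] using hi⟩

lemma snoc_add (x y : Fin d → ℕ) (c c' : ℕ) :
    (Fin.snoc x c : Fin (d+1) → ℕ) + Fin.snoc y c' = Fin.snoc (x + y) (c + c') := by
  funext j
  refine Fin.lastCases ?_ ?_ j <;> simp

lemma snoc_sum (P : Finset (Fin d → ℕ)) (z : (Fin d → ℕ) → ℕ) :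
    ∑ p ∈ P, z p • (Fin.snoc p 0 : Fin (d+1) → ℕ) = Fin.snoc (∑ p ∈ P, z p • p) 0 := by
  funext j
  refine Fin.lastCases ?_ ?_ j
  · simp [Finset.sum_apply]
  · intro j; simp [Finset.sum_apply]

lemma snoc_zero_inj : Function.Injective (fun p : Fin d → ℕ => (Fin.snoc p 0 : Fin (d+1) → ℕ)) := by
  intro p q h
  have := congrArg Fin.init h
  simpa using this

lemma semiLin_snocOne {C : Set (Fin d → ℕ)} (h : SemiLin C) :
    SemiLin {v : Fin (d+1) → ℕ | Fin.init v ∈ C ∧ v (Fin.last d) = 1} := by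
  obtain ⟨n, b, P, hC⟩ := h
  subst hC
  refine ⟨n, fun i => Fin.snoc (b i) 1,
    fun i => (P i).image (fun p => (Fin.snoc p 0 : Fin (d+1) → ℕ)), ?_⟩
  ext v
  simp only [Set.mem_setOf_eq, Set.mem_iUnion]
  constructor
  · rintro ⟨⟨i, z, hz⟩, hlast⟩
    refine ⟨i, fun p => z (Fin.init p), ?_⟩
    rw [Finset.sum_image (fun a _ c _ h => snoc_zero_inj h)]
    simp only [Fin.init_snoc]
    rw [snoc_sum, snoc_add]
    rw [← hz, add_zero]
    have hs := Fin.snoc_init_self v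
    rw [hlast] at hs
    exact hs.symm
  · rintro ⟨i, z, hz⟩
    rw [Finset.sum_image (fun a _ c _ h => snoc_zero_inj h)] at hz
    rw [snoc_sum, snoc_add, add_zero] at hz
    constructor
    · refine ⟨i, fun p => z (Fin.snoc p 0), ?_⟩
      rw [hz]; simp
    · rw [hz]; simp

lemma semiLin_lastZero :
    SemiLin {v : Fin (d+1) → ℕ | v (Fin.last d) = 0} := by
  classical
  refine ⟨1, fun _ => 0,
    fun _ => Finset.univ.image (fun j : Fin d => (Fin.snoc (Pi.single j 1) 0 : Fin (d+1) → ℕ)), ?_⟩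
  have hinj : ∀ a ∈ Finset.univ, ∀ c ∈ Finset.univ,
      (Fin.snoc (Pi.single a 1) 0 : Fin (d+1) → ℕ) = Fin.snoc (Pi.single c 1) 0 → a = c := by
    intro a _ c _ h
    have := snoc_zero_inj h
    by_contra hne
    have := congrFun this a
    simp [Pi.single_apply, hne] at this
  ext v
  simp only [Set.mem_setOf_eq, Set.mem_iUnion]
  constructor
  · intro hv
    refine ⟨0, fun p => ∑ j : Fin d, if p = Fin.snoc (Pi.single j 1) 0 then v j.castSucc else 0, ?_⟩
    rw [Finset.sum_image hinj, zero_add]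
    funext i
    refine Fin.lastCases ?_ ?_ i
    · simp [Finset.sum_apply, hv]
    · intro i
      simp only [Finset.sum_apply, Pi.smul_apply, Fin.snoc_castSucc, smul_eq_mul]
      rw [Finset.sum_eq_single i (fun c _ hci => by simp [Pi.single_apply, hci]) (by simp)]
      rw [Finset.sum_eq_single i
        (fun j _ hji => by
          rw [if_neg]
          intro h
          exact hji (hinj i (Finset.mem_univ i) j (Finset.mem_univ j) h).symm)
        (by simp)]
      simp [Pi.single_apply]
  · rintro ⟨_, z, hz⟩
    rw [Finset.sum_image hinj, zero_add] at hz
    rw [hz, Finset.sum_apply]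
    simp

end Part1
section Part1Main

variable {S : Type} {d : ℕ} {Q : Type}

/-- The lifted weak-reset automaton: fresh initial state, extra counter marking
the first transition. -/
def liftPA (A : DetPA Q S d ℕ) : DetPA (Option Q) S (d+1) ℕ where
  init := none
  trans p a :=
    match p with
    | none => (Fin.snoc (A.trans A.init a).1 1, some (A.trans A.init a).2)
    | some q => (Fin.snoc (A.trans q a).1 0, some (A.trans q a).2)
  acc p := match p with | none => False | some q => A.acc q
  C := {v | Fin.init v ∈ A.C ∧ v (Fin.last d) = 1} ∪ {v | v (Fin.last d) = 0}

lemma liftPA_stateAt (A : DetPA Q S d ℕ) (α : ℕ → S) :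
    ∀ i, 1 ≤ i → (liftPA A).stateAt α i = some (A.stateAt α i) := by
  intro i
  induction i with
  | zero => omega
  | succ i ih =>
    intro _
    rcases Nat.eq_zero_or_pos i with h0 | h1
    · subst h0; rfl
    · show ((liftPA A).trans ((liftPA A).stateAt α i) (α i)).2 =
        some ((A.trans (A.stateAt α i) (α i)).2)
      rw [ih h1]
      rfl

lemma liftPA_step (A : DetPA Q S d ℕ) (α : ℕ → S) (i : ℕ) :
    (liftPA A).step α i = Fin.snoc (A.step α i) (if i = 0 then 1 else 0) := by
  rcases Nat.eq_zero_or_pos i with h0 | h1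
  · subst h0; rfl
  · show ((liftPA A).trans ((liftPA A).stateAt α i) (α i)).1 = _
    rw [liftPA_stateAt A α i h1]
    have : (i = 0) = False := by simp; omega
    rw [show (if i = 0 then (1:ℕ) else 0) = 0 by simp; omega]
    rfl

lemma liftPA_vecSum_init (A : DetPA Q S d ℕ) (α : ℕ → S) (m n : ℕ) :
    Fin.init ((liftPA A).vecSum α m n) = A.vecSum α m n := by
  funext j
  simp only [Fin.init, DetPA.vecSum, Finset.sum_apply]
  apply Finset.sum_congr rfl
  intro i _
  rw [liftPA_step]
  exact Fin.snoc_castSucc _ _ _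

lemma liftPA_vecSum_last (A : DetPA Q S d ℕ) (α : ℕ → S) (m n : ℕ) :
    (liftPA A).vecSum α m n (Fin.last d) = if 0 ∈ Finset.Ico m n then 1 else 0 := by
  simp only [DetPA.vecSum, Finset.sum_apply]
  rw [Finset.sum_congr rfl (fun i (_ : i ∈ Finset.Ico m n) => by
    rw [liftPA_step]; simp : ∀ i ∈ Finset.Ico m n,
    (liftPA A).step α i (Fin.last d) = if i = 0 then 1 else 0)]
  exact Finset.sum_ite_eq' (Finset.Ico m n) 0 (fun _ => 1)

lemma liftPA_equiv (A : DetPA Q S d ℕ) (α : ℕ → S) :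
    A.ReachRegAccept α ↔ (liftPA A).WeakResetAccept α := by
  constructor
  · rintro ⟨⟨i₀, hi1, hacc, hsum⟩, hinf⟩
    have next : ∀ n : ℕ, ∃ i, n + 1 ≤ i ∧ A.acc (A.stateAt α i) := fun n => hinf (n+1)
    choose g hg1 hg2 using next
    set f : ℕ → ℕ := fun j => g^[j] i₀ with hf
    have hf0 : f 0 = i₀ := rfl
    have hfs : ∀ j, f (j+1) = g (f j) := fun j => Function.iterate_succ_apply' g j i₀
    have hfacc : ∀ j, A.acc (A.stateAt α (f j)) := by
      intro j; cases j with
      | zero => exact hacc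
      | succ j => rw [hfs]; exact hg2 (f j)
    have hflt : ∀ j, f j < f (j+1) := fun j => by rw [hfs]; exact hg1 (f j)
    have hf1 : ∀ j, 1 ≤ f j := by
      intro j; induction j with
      | zero => exact hi1
      | succ j ih => exact le_trans ih (le_of_lt (hflt j))
    refine ⟨fun j => match j with | 0 => 0 | j+1 => f j, rfl, ?_, ?_, ?_⟩
    · apply strictMono_nat_of_lt_succ
      intro j; cases j with
      | zero => show 0 < f 0; rw [hf0]; omega
      | succ j => exact hflt j
    · intro i
      show (liftPA A).acc ((liftPA A).stateAt α (f i))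
      rw [liftPA_stateAt A α (f i) (hf1 i)]
      exact hfacc i
    · intro i
      cases i with
      | zero =>
        left
        constructor
        · show Fin.init ((liftPA A).vecSum α 0 (f 0)) ∈ A.C
          rw [liftPA_vecSum_init, hf0]; exact hsum
        · show (liftPA A).vecSum α 0 (f 0) (Fin.last d) = 1
          rw [liftPA_vecSum_last]
          simp [hf0]; omega
      | succ i =>
        right
        show (liftPA A).vecSum α (f i) (f (i+1)) (Fin.last d) = 0
        rw [liftPA_vecSum_last]
        have := hf1 i
        simp; omega
  · rintro ⟨k, hk0, hkm, hkacc, hkC⟩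
    have hk1 : 1 ≤ k 1 := by have := hkm (show 0 < 1 by norm_num); omega
    constructor
    · refine ⟨k 1, hk1, ?_, ?_⟩
      · have := hkacc 0
        rwa [liftPA_stateAt A α (k 1) hk1] at this
      · have := hkC 0
        rw [hk0] at this
        rcases this with ⟨h1, _⟩ | h2
        · rwa [liftPA_vecSum_init] at h1
        · simp only [Set.mem_setOf_eq] at h2
          rw [liftPA_vecSum_last] at h2
          simp at h2; omega
    · intro n
      have hge : n + 1 ≤ k (n+1) := hkm.le_apply
      refine ⟨k (n+1), by omega, ?_⟩
      have := hkacc n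
      rwa [liftPA_stateAt A α (k (n+1)) (by omega)] at this

lemma part1 {S : Type} (L : Set (ℕ → S)) : DetReachRegRecog L → DetWeakResetRecog L := by
  rintro ⟨d, Q, hQ, A, hC, hL⟩
  haveI := hQ
  haveI := Fintype.ofFinite Q
  refine ⟨d+1, Option Q, inferInstance, liftPA A, ?_, ?_⟩
  · exact semiLin_union (semiLin_snocOne hC) semiLin_lastZero
  · rw [hL]
    ext α
    exact liftPA_equiv A α

end Part1Main
/-! ### Part 2: a deterministic weak-reset PA for `{aⁿbⁿ}^ω` -/

section Part2

/-- States: `s0` initial, `sa` just read the first `a` of a block,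
`s1` inside an `a`-run, `s2` inside a `b`-run, `sb` sink. -/
inductive St2 : Type
  | s0 | sa | s1 | s2 | sb
deriving DecidableEq

instance : Fintype St2 :=
  ⟨{St2.s0, St2.sa, St2.s1, St2.s2, St2.sb}, fun x => by cases x <;> simp⟩

open St2

def A2 : DetPA St2 Bool 4 ℕ where
  init := s0
  trans p x :=
    match p, x with
    | s0, true => (![1,0,0,1], sa)
    | s0, false => (![0,0,0,1], sb)
    | sa, true => (![1,0,0,0], s1)
    | sa, false => (![0,1,0,0], s2)
    | s1, true => (![1,0,0,0], s1)
    | s1, false => (![0,1,0,0], s2)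
    | s2, true => (![1,0,1,0], sa)
    | s2, false => (![0,1,0,0], s2)
    | sb, _ => (0, sb)
  acc p := p = sa
  C := LinSet ![1,1,1,0] {![1,1,0,0]} ∪ LinSet ![1,0,0,1] ∅

lemma vadd4 (a b c d e f g h : ℕ) :
    ![a,b,c,d] + ![e,f,g,h] = ![a+e, b+f, c+g, d+h] := by
  funext i; fin_cases i <;> rfl

lemma mem_C2 (v : Fin 4 → ℕ) :
    v ∈ A2.C ↔ (∃ n : ℕ, v = ![n+1, n+1, 1, 0]) ∨ v = ![1,0,0,1] := by
  constructor
  · rintro (⟨z, hz⟩ | ⟨z, hz⟩)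
    · left
      refine ⟨z ![1,1,0,0], ?_⟩
      rw [hz, Finset.sum_singleton]
      funext i; fin_cases i <;> simp [Matrix.cons_val_zero, Matrix.cons_val_one] <;> ring
    · right
      rw [hz]; simp
  · rintro (⟨n, hn⟩ | hv)
    · left
      refine ⟨fun _ => n, ?_⟩
      rw [Finset.sum_singleton, hn]
      funext i; fin_cases i <;> simp <;> ring
    · right
      exact ⟨fun _ => 0, by rw [hv]; simp⟩

end Part2
section Part2Inv

open St2

lemma v40 (a b c d : ℕ) : ![a,b,c,d] 0 = a := rfl
lemma v41 (a b c d : ℕ) : ![a,b,c,d] 1 = b := rfl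
lemma v42 (a b c d : ℕ) : ![a,b,c,d] 2 = c := rfl
lemma v43 (a b c d : ℕ) : ![a,b,c,d] 3 = d := rfl

lemma tr0t : A2.trans s0 true = (![1,0,0,1], sa) := rfl
lemma tr0f : A2.trans s0 false = (![0,0,0,1], sb) := rfl
lemma trat : A2.trans sa true = (![1,0,0,0], s1) := rfl
lemma traf : A2.trans sa false = (![0,1,0,0], s2) := rfl
lemma tr1t : A2.trans s1 true = (![1,0,0,0], s1) := rfl
lemma tr1f : A2.trans s1 false = (![0,1,0,0], s2) := rfl
lemma tr2t : A2.trans s2 true = (![1,0,1,0], sa) := rfl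
lemma tr2f : A2.trans s2 false = (![0,1,0,0], s2) := rfl
lemma trbt : A2.trans sb true = (0, sb) := rfl
lemma trbf : A2.trans sb false = (0, sb) := rfl

lemma runList2_nil : A2.runList sa [] = sa := rfl
lemma sumList2_nil : A2.sumList sa [] = 0 := rfl

lemma inv2 (w : List Bool) :
    (A2.sumList sa w) 3 = 0 ∧
    A2.runList sa w ≠ s0 ∧ A2.runList sa w ≠ sb ∧
    (A2.runList sa w = sa → (w = [] ∧ A2.sumList sa w = 0) ∨
        (∃ r s, 1 ≤ s ∧ w = List.replicate r true ++ List.replicate s false ++ [true] ∧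
          A2.sumList sa w = ![r+1, s, 1, 0]) ∨ 2 ≤ A2.sumList sa w 2) ∧
    (A2.runList sa w = s1 →
        (∃ r, 1 ≤ r ∧ w = List.replicate r true ∧ A2.sumList sa w = ![r,0,0,0]) ∨
        1 ≤ A2.sumList sa w 2) ∧
    (A2.runList sa w = s2 →
        (∃ r s, 1 ≤ s ∧ w = List.replicate r true ++ List.replicate s false ∧
          A2.sumList sa w = ![r,s,0,0]) ∨ 1 ≤ A2.sumList sa w 2) := by
  induction w using List.reverseRecOn with
  | nil =>
    refine ⟨rfl, by simp [runList2_nil], by simp [runList2_nil], ?_, ?_, ?_⟩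
    · intro _; exact Or.inl ⟨rfl, rfl⟩
    · intro h; rw [runList2_nil] at h; simp at h
    · intro h; rw [runList2_nil] at h; simp at h
  | append_singleton w x ih =>
    obtain ⟨ih3, ihs0, ihsb, ihsa, ihs1, ihs2⟩ := ih
    rw [A2.runList_snoc, A2.sumList_snoc]
    rcases hq : A2.runList sa w with _ | _ | _ | _ | _
    · exact absurd hq ihs0
    · -- q = sa
      rcases ihsa hq with ⟨hw, hu⟩ | ⟨r, s, hs, hw, hu⟩ | h2
      · subst hw
        rw [sumList2_nil] at hu ⊢
        cases x
        · rw [traf]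
          refine ⟨by simp [v43], by simp, by simp, by simp, by simp, ?_⟩
          intro _
          exact Or.inl ⟨0, 1, le_refl 1, by simp, by simp⟩
        · rw [trat]
          refine ⟨by simp [v43], by simp, by simp, by simp, ?_, by simp⟩
          intro _
          exact Or.inl ⟨1, le_refl 1, by simp, by simp⟩
      · cases x
        · rw [traf]
          refine ⟨by simp [Pi.add_apply, ih3, v43], by simp, by simp, by simp, by simp, ?_⟩
          intro _
          right; simp [Pi.add_apply, hu, v42]
        · rw [trat]
          refine ⟨by simp [Pi.add_apply, ih3, v43], by simp, by simp, by simp, ?_, by simp⟩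
          intro _
          right; simp [Pi.add_apply, hu, v42]
      · cases x
        · rw [traf]
          refine ⟨by simp [Pi.add_apply, ih3, v43], by simp, by simp, by simp, by simp, ?_⟩
          intro _
          right; simp [Pi.add_apply, v42]; omega
        · rw [trat]
          refine ⟨by simp [Pi.add_apply, ih3, v43], by simp, by simp, by simp, ?_, by simp⟩
          intro _
          right; simp [Pi.add_apply, v42]; omega
    · -- q = s1
      rcases ihs1 hq with ⟨r, hr, hw, hu⟩ | h1
      · cases x
        · rw [tr1f]
          refine ⟨by simp [Pi.add_apply, ih3, v43], by simp, by simp, by simp, by simp, ?_⟩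
          intro _
          refine Or.inl ⟨r, 1, le_refl 1, by simp [hw], ?_⟩
          rw [hu, vadd4]; try norm_num
        · rw [tr1t]
          refine ⟨by simp [Pi.add_apply, ih3, v43], by simp, by simp, by simp, ?_, by simp⟩
          intro _
          refine Or.inl ⟨r+1, by omega, by rw [hw, List.replicate_succ'], ?_⟩
          rw [hu, vadd4]; try norm_num
      · cases x
        · rw [tr1f]
          refine ⟨by simp [Pi.add_apply, ih3, v43], by simp, by simp, by simp, by simp, ?_⟩
          intro _
          right; simp [Pi.add_apply, v42]; omega
        · rw [tr1t]
          refine ⟨by simp [Pi.add_apply, ih3, v43], by simp, by simp, by simp, ?_, by simp⟩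
          intro _
          right; simp [Pi.add_apply, v42]; omega
    · -- q = s2
      rcases ihs2 hq with ⟨r, s, hs, hw, hu⟩ | h1
      · cases x
        · rw [tr2f]
          refine ⟨by simp [Pi.add_apply, ih3, v43], by simp, by simp, by simp, by simp, ?_⟩
          intro _
          refine Or.inl ⟨r, s+1, by omega, ?_, ?_⟩
          · rw [hw, List.replicate_succ' (n := s), ← List.append_assoc]
          · rw [hu, vadd4]; try norm_num
        · rw [tr2t]
          refine ⟨by simp [Pi.add_apply, ih3, v43], by simp, by simp, ?_, by simp, by simp⟩
          intro _
          refine Or.inr (Or.inl ⟨r, s, hs, by rw [hw], ?_⟩)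
          rw [hu, vadd4]; try norm_num
      · cases x
        · rw [tr2f]
          refine ⟨by simp [Pi.add_apply, ih3, v43], by simp, by simp, by simp, by simp, ?_⟩
          intro _
          right; simp [Pi.add_apply, v42]; omega
        · rw [tr2t]
          refine ⟨by simp [Pi.add_apply, ih3, v43], by simp, by simp, ?_, by simp, by simp⟩
          intro _
          right; right; simp [Pi.add_apply, v42]; omega
    · exact absurd hq ihsb

end Part2Inv
section Part2Lemmas

open St2

lemma runList_cons {Q S M : Type} {d : ℕ} (A : DetPA Q S d M) (p : Q) (a : S) (w : List S) :
    A.runList p (a :: w) = A.runList (A.trans p a).2 w := rfl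

lemma sumList_cons {Q S M : Type} {d : ℕ} (A : DetPA Q S d M) (p : Q) (a : S) (w : List S) :
    A.sumList p (a :: w) = (A.trans p a).1 + A.sumList (A.trans p a).2 w := rfl

lemma runList_sb (w : List Bool) : A2.runList sb w = sb := by
  induction w with
  | nil => rfl
  | cons a w ih => cases a <;> simpa [runList_cons, trbt, trbf] using ih

lemma veq4 {a b c d a' b' c' d' : ℕ} (h0 : a = a') (h1 : b = b') (h2 : c = c')
    (h3 : d = d') : ![a,b,c,d] = ![a',b',c',d'] := by subst h0 h1 h2 h3; rfl

lemma zero4 : (0 : Fin 4 → ℕ) = ![0,0,0,0] := by funext i; fin_cases i <;> rfl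

/-- First-segment analysis: a word from the initial state ending at `sa`
with constraint satisfied must be the single letter `a`. -/
lemma first2 (w : List Bool) (hq : A2.runList s0 w = sa) (hv : A2.sumList s0 w ∈ A2.C) :
    w = [true] := by
  cases w with
  | nil => simp [DetPA.runList] at hq
  | cons x w' =>
    cases x
    · rw [runList_cons, tr0f, runList_sb] at hq
      simp at hq
    · rw [runList_cons, tr0t] at hq
      rw [sumList_cons, tr0t] at hv
      obtain ⟨ih3, _, _, ihsa, _, _⟩ := inv2 w'
      rcases (mem_C2 _).1 hv with ⟨n, hn⟩ | hn
      · have := congrFun hn 3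
        simp [Pi.add_apply, v43, ih3] at this
      · have h0 := congrFun hn 0
        have h2 := congrFun hn 2
        simp [Pi.add_apply, v40, v42] at h0 h2
        rcases ihsa hq with ⟨hw, _⟩ | ⟨r, s, hs, hw, hu⟩ | hg
        · rw [hw]
        · rw [hu, v42] at h2; omega
        · omega

/-- Later-segment analysis: a word from `sa` back to `sa` satisfying the
constraint has the form `aʳ bʳ⁺¹ a`. -/
lemma seg2 (w : List Bool) (hq : A2.runList sa w = sa) (hv : A2.sumList sa w ∈ A2.C) :
    ∃ r, w = List.replicate r true ++ List.replicate (r+1) false ++ [true] := by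
  obtain ⟨ih3, _, _, ihsa, _, _⟩ := inv2 w
  rcases (mem_C2 _).1 hv with ⟨n, hn⟩ | hn
  · rcases ihsa hq with ⟨hw, hu⟩ | ⟨r, s, hs, hw, hu⟩ | hg
    · rw [hw] at hn
      rw [sumList2_nil] at hn
      have := congrFun hn 0
      simp [v40] at this
    · rw [hu] at hn
      have h0 := congrFun hn 0
      have h1 := congrFun hn 1
      rw [v40, v40] at h0
      rw [v41, v41] at h1
      refine ⟨r, ?_⟩
      have hsr : s = r + 1 := by omega
      rw [hw, hsr]
    · rw [hn, v42] at hg; omega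
  · rw [hn, v43] at ih3; omega

lemma replT (r : ℕ) (p : St2) (hp : p = sa ∨ p = s1) :
    A2.runList p (List.replicate r true) = (if r = 0 then p else s1) ∧
    A2.sumList p (List.replicate r true) = ![r,0,0,0] := by
  induction r generalizing p with
  | zero => exact ⟨rfl, zero4⟩
  | succ r ih =>
    rw [List.replicate_succ, runList_cons, sumList_cons]
    have ht : A2.trans p true = (![1,0,0,0], s1) := by rcases hp with h | h <;> rw [h] <;> rfl
    rw [ht]
    obtain ⟨h1, h2⟩ := ih s1 (Or.inr rfl)
    constructor
    · rw [h1]; split <;> simp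
    · rw [h2, vadd4]; apply veq4 <;> omega

lemma replF (s : ℕ) (p : St2) (hs : 1 ≤ s) (hp : p = sa ∨ p = s1 ∨ p = s2) :
    A2.runList p (List.replicate s false) = s2 ∧
    A2.sumList p (List.replicate s false) = ![0,s,0,0] := by
  induction s generalizing p with
  | zero => omega
  | succ s ih =>
    rw [List.replicate_succ, runList_cons, sumList_cons]
    have ht : A2.trans p false = (![0,1,0,0], s2) := by
      rcases hp with h | h | h <;> rw [h] <;> rfl
    rw [ht]
    rcases Nat.eq_zero_or_pos s with h0 | h1
    · subst h0
      refine ⟨rfl, ?_⟩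
      rw [show A2.sumList s2 (List.replicate 0 false) = 0 from rfl]
      rw [add_zero]
    · obtain ⟨h1', h2⟩ := ih s2 h1 (Or.inr (Or.inr rfl))
      refine ⟨h1', ?_⟩
      rw [h2, vadd4]; apply veq4 <;> omega

lemma blockRun (r s : ℕ) (hs : 1 ≤ s) :
    A2.runList sa (List.replicate r true ++ List.replicate s false ++ [true]) = sa ∧
    A2.sumList sa (List.replicate r true ++ List.replicate s false ++ [true])
      = ![r+1, s, 1, 0] := by
  obtain ⟨hr1, hr2⟩ := replT r sa (Or.inl rfl)
  have hmid : A2.runList sa (List.replicate r true) = sa ∨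
      A2.runList sa (List.replicate r true) = s1 := by
    rw [hr1]; split
    · exact Or.inl rfl
    · exact Or.inr rfl
  obtain ⟨hf1, hf2⟩ := replF s (A2.runList sa (List.replicate r true)) hs
    (by rcases hmid with h | h <;> simp [h])
  constructor
  · rw [A2.runList_append, A2.runList_append, hf1]
    rfl
  · rw [A2.sumList_append, A2.sumList_append, hf2, hr2, A2.runList_append, hf1]
    rw [show A2.sumList s2 [true] = ![1,0,1,0] + 0 from rfl, add_zero]
    rw [vadd4, vadd4]
    apply veq4 <;> omega

end Part2Lemmas
section Part2Main

open St2

lemma getElem_rTrF (a b j : ℕ) (h : j < a + b) :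
    (List.replicate a true ++ List.replicate b false)[j]'(by simp; omega)
      = decide (j < a) := by
  rcases lt_or_ge j a with hj | hj
  · rw [List.getElem_append_left (by simpa using hj)]
    simp [hj]
  · rw [List.getElem_append_right (by simpa using hj)]
    simp; omega

lemma getElem_rTrFT (a b j : ℕ) (h : j < a + b + 1) :
    (List.replicate a true ++ List.replicate b false ++ [true])[j]'(by simp; omega)
      = (if j < a then true else if j < a + b then false else true) := by
  rcases lt_or_ge j (a + b) with hj | hj
  · rw [List.getElem_append_left (by simpa using hj)]
    rw [getElem_rTrF a b j hj]
    rcases lt_or_ge j a with h2 | h2 <;> simp [h2] <;> omega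
  · rw [List.getElem_append_right (by simpa using hj)]
    simp
    omega

lemma stateAt0 (α : ℕ → Bool) : A2.stateAt α 0 = s0 := rfl

lemma semiLin_linSet {d : ℕ} (b : Fin d → ℕ) (P : Finset (Fin d → ℕ)) :
    SemiLin (LinSet b P) :=
  ⟨1, fun _ => b, fun _ => P, (Set.iUnion_const _).symm⟩

lemma part2 : DetWeakResetRecog (omegaPow Wanbn) := by
  refine ⟨4, St2, inferInstance, A2, ?_, ?_⟩
  · exact semiLin_union (semiLin_linSet _ _) (semiLin_linSet _ _)
  ext α
  constructor
  · -- omegaPow → weak reset accept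
    rintro ⟨k', h0, hmono, hblk⟩
    choose nn hn1 hn2 using hblk
    have hlen : ∀ i, k' (i+1) = k' i + 2 * nn i := by
      intro i
      have h := (letters_of_infix (hn2 i)).1
      simp at h
      have := hmono (show i < i + 1 by omega)
      omega
    have hlet : ∀ i j, j < 2 * nn i → α (k' i + j) = decide (j < nn i) := by
      intro i j hj
      have h := (letters_of_infix (hn2 i)).2 j (by simp; omega)
      rw [h, getElem_rTrF (h := by omega)]
    -- segment words
    have hw : ∀ i, infixSeg α (k' i + 1) (k' (i+1) + 1)
        = List.replicate (nn i - 1) true ++ List.replicate (nn i) false ++ [true] := by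
      intro i
      apply infix_of_letters
      · simp
        have := hn1 i
        rw [hlen i]
        omega
      · intro j hj
        simp at hj
        have hni := hn1 i
        rw [getElem_rTrFT (h := by omega)]
        rcases Nat.lt_or_ge j (2 * nn i - 1) with hjl | hjl
        · have : k' i + 1 + j = k' i + (1 + j) := by omega
          rw [this, hlet i (1+j) (by omega)]
          rcases lt_or_ge j (nn i - 1) with h2 | h2
          · rw [if_pos h2]
            simp; omega
          · rw [if_neg (by omega), if_pos (by omega)]
            simp; omega
        · have hje : j = 2 * nn i - 1 := by omega
          have : k' i + 1 + j = k' (i+1) := by rw [hlen i]; omega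
          rw [this]
          have hfirst := hlet (i+1) 0 (by have := hn1 (i+1); omega)
          simp [hn1 (i+1)] at hfirst
          rw [hfirst]
          simp
          omega
    have hsa : ∀ i, A2.stateAt α (k' i + 1) = sa := by
      intro i
      induction i with
      | zero =>
        rw [h0]
        have ha0 : α 0 = true := by
          have := hlet 0 0 (by have := hn1 0; omega)
          simp [hn1 0, h0] at this
          exact this
        show (A2.trans (A2.stateAt α 0) (α 0)).2 = sa
        rw [stateAt0, ha0, tr0t]
      | succ i ih =>
        have hle : k' i + 1 ≤ k' (i+1) + 1 := by have := hmono (show i < i + 1 by omega); omega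
        rw [A2.stateAt_eq_runList α hle, ih, hw i]
        exact (blockRun (nn i - 1) (nn i) (hn1 i)).1
    refine ⟨fun j => match j with | 0 => 0 | j+1 => k' j + 1, rfl, ?_, ?_, ?_⟩
    · apply strictMono_nat_of_lt_succ
      intro j
      cases j with
      | zero => show 0 < k' 0 + 1; omega
      | succ j =>
        show k' j + 1 < k' (j+1) + 1
        have := hmono (show j < j + 1 by omega); omega
    · intro i
      show A2.acc (A2.stateAt α (k' i + 1))
      show A2.stateAt α (k' i + 1) = sa
      exact hsa i
    · intro i
      cases i with
      | zero =>
        show A2.vecSum α 0 (k' 0 + 1) ∈ A2.C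
        rw [h0]
        have ha0 : α 0 = true := by
          have := hlet 0 0 (by have := hn1 0; omega)
          rw [h0] at this
          simp [hn1 0] at this
          exact this
        have : infixSeg α 0 1 = [true] := by
          apply infix_of_letters (by simp)
          intro j hj
          simp at hj
          subst hj
          simpa using ha0
        rw [A2.vecSum_eq_sumList α (by omega), this, stateAt0]
        rw [show A2.sumList s0 [true] = ![1,0,0,1] + 0 from rfl, add_zero]
        exact (mem_C2 _).2 (Or.inr rfl)
      | succ i =>
        show A2.vecSum α (k' i + 1) (k' (i+1) + 1) ∈ A2.C
        have hle : k' i + 1 ≤ k' (i+1) + 1 := by have := hmono (show i < i + 1 by omega); omega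
        rw [A2.vecSum_eq_sumList α hle, hsa i, hw i]
        rw [(blockRun (nn i - 1) (nn i) (hn1 i)).2]
        refine (mem_C2 _).2 (Or.inl ⟨nn i - 1, ?_⟩)
        apply veq4 rfl (by have := hn1 i; omega) rfl rfl
  · -- weak reset accept → omegaPow
    rintro ⟨k, hk0, hkm, hacc, hC⟩
    have hacc' : ∀ i, A2.stateAt α (k (i+1)) = sa := fun i => hacc i
    have hkpos : ∀ i, 1 ≤ k (i+1) := by
      intro i
      have : k 0 < k (i+1) := hkm (by omega)
      omega
    -- first segment
    have hk1 : infixSeg α 0 (k 1) = [true] := by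
      apply first2
      · have h := A2.stateAt_eq_runList α (m := 0) (n := k 1) (by omega)
        rw [stateAt0] at h
        rw [← h]
        exact hacc' 0
      · have h := A2.vecSum_eq_sumList α (m := 0) (n := k 1) (by omega)
        rw [stateAt0] at h
        rw [← h]
        have := hC 0
        rwa [hk0] at this
    have hk1v : k 1 = 1 := by
      have := (letters_of_infix hk1).1
      simpa using this
    have ha0 : α 0 = true := by
      have := (letters_of_infix hk1).2 0 (by simp)
      simpa using this
    -- later segments
    have hseg : ∀ i, ∃ r, infixSeg α (k (i+1)) (k (i+2))
        = List.replicate r true ++ List.replicate (r+1) false ++ [true] := by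
      intro i
      apply seg2
      · have h := A2.stateAt_eq_runList α (m := k (i+1)) (n := k (i+2))
          (le_of_lt (hkm (show i+1 < i+2 by omega)))
        rw [hacc' i] at h
        rw [← h]
        exact hacc' (i+1)
      · have h := A2.vecSum_eq_sumList α (m := k (i+1)) (n := k (i+2))
          (le_of_lt (hkm (show i+1 < i+2 by omega)))
        rw [hacc' i] at h
        rw [← h]
        exact hC (i+1)
    choose r hr using hseg
    have hlen : ∀ i, k (i+2) = k (i+1) + 2 * r i + 2 := by
      intro i
      have h := (letters_of_infix (hr i)).1
      simp at h
      have := hkm (Nat.lt_succ_self (i+1))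
      omega
    have hlet : ∀ i j, j < 2 * r i + 2 → α (k (i+1) + j)
        = (if j < r i then true else if j < 2 * r i + 1 then false else true) := by
      intro i j hj
      have h := (letters_of_infix (hr i)).2 j (by simp; omega)
      rw [h, getElem_rTrFT (h := by omega)]
      have he : r i + (r i + 1) = 2 * r i + 1 := by omega
      rw [he]
    have hlead : ∀ j, α (k (j+1) - 1) = true := by
      intro j
      cases j with
      | zero =>
        have : k 1 - 1 = 0 := by rw [hk1v]
        rw [this]; exact ha0
      | succ j =>
        have : k (j+2) - 1 = k (j+1) + (2 * r j + 1) := by rw [hlen j]; omega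
        rw [this, hlet j (2 * r j + 1) (by omega)]
        simp
    refine ⟨fun j => k (j+1) - 1, by show k 1 - 1 = 0; rw [hk1v], ?_, ?_⟩
    · intro a b hab
      show k (a+1) - 1 < k (b+1) - 1
      have := hkm (show a + 1 < b + 1 by omega)
      have := hkpos a
      have := hkpos b
      omega
    · intro j
      show ∃ n, 0 < n ∧ infixSeg α (k (j+1) - 1) (k (j+1+1) - 1)
        = List.replicate n true ++ List.replicate n false
      refine ⟨r j + 1, by omega, ?_⟩
      apply infix_of_letters
      · simp
        have := hkpos j
        rw [hlen j]
        omega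
      · intro t ht
        simp at ht
        rw [getElem_rTrF (h := by omega)]
        cases t with
        | zero =>
          simp
          simpa using hlead j
        | succ t =>
          have : k (j+1) - 1 + (t+1) = k (j+1) + t := by have := hkpos j; omega
          rw [this, hlet j t (by omega)]
          rcases lt_or_ge t (r j) with h2 | h2 <;> simp [h2] <;> omega

end Part2Main
/-! ### Part 3: `{aⁿbⁿ}^ω` is not reachability-regular recognizable -/

section Part3

/-- The word `(aᵐbᵐ)^ω`. -/
def patα (m : ℕ) : ℕ → Bool := fun i => decide (i % (2*m) < m)

lemma patval (m t u : ℕ) (hu : u < 2*m) :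
    patα m (2*m*t + u) = decide (u < m) := by
  show decide ((2*m*t + u) % (2*m) < m) = decide (u < m)
  rw [Nat.mul_add_mod, Nat.mod_eq_of_lt hu]

lemma pat_mem (m : ℕ) (hm : 1 ≤ m) : patα m ∈ omegaPow Wanbn := by
  refine ⟨fun i => 2*m*i, by simp, ?_, ?_⟩
  · apply strictMono_nat_of_lt_succ
    intro i
    have : 2*m*(i+1) = 2*m*i + 2*m := by ring
    omega
  · intro i
    refine ⟨m, hm, ?_⟩
    apply infix_of_letters
    · have : 2*m*(i+1) = 2*m*i + 2*m := by ring
      simp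
      omega
    · intro j hj
      simp at hj
      rw [getElem_rTrF (h := by omega)]
      exact patval m i j (by omega)

lemma part3 : ¬ NPAReachRegRecog (omegaPow Wanbn) := by
  rintro ⟨d, Q, hQ, A, hC, hL⟩
  haveI := Fintype.ofFinite Q
  set m := Fintype.card Q + 1 with hmdef
  have hm : 1 ≤ m := by omega
  have hα : patα m ∈ omegaPow Wanbn := pat_mem m hm
  rw [hL] at hα
  obtain ⟨r, v, ⟨hr0, hrtrans⟩, ⟨i₀, hi₀, hacc, hsum⟩, hinf⟩ := hα
  set s := 2*m*i₀ with hs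
  have hsge : i₀ ≤ s := by
    rw [hs]
    calc i₀ = 1 * i₀ := (one_mul i₀).symm
    _ ≤ 2*m*i₀ := Nat.mul_le_mul_right i₀ (by omega)
  -- pigeonhole on the a-block beyond the reach point
  obtain ⟨p, q, hsp, hpq, hqs, hrpq⟩ :
      ∃ p q, s ≤ p ∧ p < q ∧ q ≤ s + m ∧ r p = r q := by
    obtain ⟨x, y, hxy, hfe⟩ := Fintype.exists_ne_map_eq_of_card_lt
      (fun j : Fin (m+1) => r (s + j)) (by simp; omega)
    rcases lt_or_gt_of_ne hxy with h | h
    · exact ⟨s + x, s + y, by omega, by have : (x:ℕ) < y := h; omega,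
        by have : (y:ℕ) < m + 1 := y.isLt; omega, hfe⟩
    · exact ⟨s + y, s + x, by omega, by have : (y:ℕ) < x := h; omega,
        by have : (x:ℕ) < m + 1 := x.isLt; omega, hfe.symm⟩
  obtain ⟨δ, hδ1, hδq⟩ : ∃ δ, 1 ≤ δ ∧ q = p + δ := ⟨q - p, by omega, by omega⟩
  have hδm : δ ≤ m := by omega
  -- the pumped word
  set β : ℕ → Bool := fun j => if j < q then patα m j else patα m (j - δ) with hβ
  -- β is accepted
  have hβacc : A.ReachRegAccept β := by
    refine ⟨fun j => if j < q then r j else r (j - δ),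
      fun j => if j < q then v j else v (j - δ), ⟨by simp [show 0 < q by omega, hr0], ?_⟩,
      ⟨i₀, hi₀, ?_, ?_⟩, ?_⟩
    · intro j
      rcases lt_or_ge j q with hjq | hjq
      · have hβj : β j = patα m j := if_pos hjq
        rcases lt_or_ge (j+1) q with hj1 | hj1
        · simpa [hjq, hj1, hβj] using hrtrans j
        · have : r (j + 1 - δ) = r (j+1) := by
            rw [show j + 1 - δ = p by omega, hrpq, show q = j + 1 by omega]
          simp only [if_pos hjq, if_neg (show ¬ j + 1 < q by omega), this, hβj]
          exact hrtrans j
      · have h1 : ¬ j < q := by omega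
        have h2 : ¬ j + 1 < q := by omega
        have h3 : j + 1 - δ = (j - δ) + 1 := by omega
        have hβj : β j = patα m (j - δ) := if_neg h1
        simp only [if_neg h1, if_neg h2, h3, hβj]
        exact hrtrans (j - δ)
    · simpa [show i₀ < q by omega] using hacc
    · have : NPA.partSum (fun j => if j < q then v j else v (j - δ)) 0 i₀
          = NPA.partSum v 0 i₀ := by
        apply Finset.sum_congr rfl
        intro i hi
        simp only [Finset.mem_Ico] at hi
        have : i < q := by omega
        simp [this]
      rw [this]
      exact hsum
    · intro n
      obtain ⟨i, hi, hia⟩ := hinf (n + q)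
      refine ⟨i + δ, by omega, ?_⟩
      have h1 : ¬ i + δ < q := by omega
      simpa [h1, show i + δ - δ = i by omega] using hia
  have hβmem : β ∈ omegaPow Wanbn := by
    rw [hL]; exact hβacc
  -- letter facts about β
  have F1 : ∀ j, j < s → β j = decide (j % (2*m) < m) := by
    intro j hj
    show (if j < q then patα m j else patα m (j - δ)) = _
    rw [if_pos (by omega)]
    rfl
  have F2 : ∀ j, s ≤ j → j < s + m + δ → β j = true := by
    intro j h1 h2
    show (if j < q then patα m j else patα m (j - δ)) = true
    rcases lt_or_ge j q with hjq | hjq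
    · rw [if_pos hjq, show j = 2*m*i₀ + (j - s) by omega, patval m i₀ (j - s) (by omega)]
      simp; omega
    · rw [if_neg (by omega), show j - δ = 2*m*i₀ + (j - δ - s) by omega,
        patval m i₀ (j - δ - s) (by omega)]
      simp; omega
  have F3 : ∀ j, s + m + δ ≤ j → j < s + 2*m + δ → β j = false := by
    intro j h1 h2
    show (if j < q then patα m j else patα m (j - δ)) = false
    rw [if_neg (by omega), show j - δ = 2*m*i₀ + (j - δ - s) by omega,
      patval m i₀ (j - δ - s) (by omega)]
    simp; omega
  have F4 : β (s + 2*m + δ) = true := by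
    show (if s + 2*m + δ < q then patα m (s + 2*m + δ) else patα m (s + 2*m + δ - δ)) = true
    rw [if_neg (by omega), show s + 2*m + δ - δ = 2*m*(i₀+1) + 0 by rw [Nat.add_sub_cancel, hs]; ring,
      patval m (i₀+1) 0 (by omega)]
    simp; omega
  -- decomposition of β leads to a contradiction
  obtain ⟨k, hk0, hkm, hblk⟩ := hβmem
  choose nb hb1 hb2 using hblk
  have hlen : ∀ i, k (i+1) = k i + 2 * nb i := by
    intro i
    have h := (letters_of_infix (hb2 i)).1
    simp at h
    have := hkm (show i < i + 1 by omega)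
    omega
  have hlet : ∀ i j, j < 2 * nb i → β (k i + j) = decide (j < nb i) := by
    intro i j hj
    have h := (letters_of_infix (hb2 i)).2 j (by simp; omega)
    rw [h, getElem_rTrF (h := by omega)]
  have claim : ∀ i, i ≤ i₀ → k i = 2*m*i := by
    intro i
    induction i with
    | zero => intro _; simpa using hk0
    | succ i ih =>
      intro hiT
      have hki : k i = 2*m*i := ih (by omega)
      have hF : ∀ u, u < 2*m → β (k i + u) = decide (u < m) := by
        intro u hu
        have hlt : k i + u < s := by
          rw [hki, hs]
          have h1 : 2*m*(i+1) = 2*m*i + 2*m := by ring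
          have h2 : 2*m*(i+1) ≤ 2*m*i₀ := Nat.mul_le_mul_left (2*m) hiT
          omega
        rw [F1 _ hlt, hki]
        have : (2*m*i + u) % (2*m) = u := by
          rw [Nat.mul_add_mod, Nat.mod_eq_of_lt hu]
        rw [this]
      have hnm : nb i = m := by
        rcases lt_trichotomy (nb i) m with h | h | h
        · exfalso
          have h1 := hlet i (nb i) (by have := hb1 i; omega)
          have h2 := hF (nb i) (by omega)
          rw [h1] at h2
          simp at h2
          omega
        · exact h
        · exfalso
          have h1 := hlet i m (by omega)
          have h2 := hF m (by omega)
          rw [h1] at h2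
          simp at h2
          omega
      rw [hlen i, hki, hnm]
      ring
  have hkT : k i₀ = s := by rw [claim i₀ le_rfl, hs]
  -- the block starting at position s
  have hlT : ∀ u, u < 2 * nb i₀ → β (s + u) = decide (u < nb i₀) := by
    intro u hu
    rw [← hkT]
    exact hlet i₀ u hu
  have hge : m + δ ≤ nb i₀ := by
    by_contra h
    have h1 := hlT (nb i₀) (by have := hb1 i₀; omega)
    have h2 := F2 (s + nb i₀) (by omega) (by omega)
    rw [h1] at h2
    simp at h2
  have hle : nb i₀ ≤ m + δ := by
    by_contra h
    have h1 := hlT (m + δ) (by omega)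
    have h2 := F3 (s + (m + δ)) (by omega) (by omega)
    rw [h1] at h2
    simp at h2
    omega
  have hne : nb i₀ = m + δ := le_antisymm hle hge
  have h1 := hlT (2*m + δ) (by omega)
  have h2 : β (s + (2*m + δ)) = true := by
    rw [show s + (2*m + δ) = s + 2*m + δ by ring]
    exact F4
  rw [h1] at h2
  simp at h2
  omega

end Part3
/-- deterministic reachability-regular PA ⊆ deterministic weak reset PA;
strictness: `{aⁿbⁿ | n > 0}^ω` is det. weak reset recognizable but not (even
nondeterministic) reachability-regular PA recognizable. -/
theorem detReachReg_subset_detWeakReset_strict :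
    (∀ (S : Type) (L : Set (ℕ → S)), DetReachRegRecog L → DetWeakResetRecog L) ∧
    DetWeakResetRecog (omegaPow Wanbn) ∧ ¬ NPAReachRegRecog (omegaPow Wanbn) :=
  ⟨fun _ L => part1 L, part2, part3⟩
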